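/- (Robbins–Siegmund-type deterministic lemma) Let {ν_k} be a sequence of nonnegative reals and {α_k}, {β_k} scalar sequences satisfying ν_{k+1} ≤ (1-α_k)ν_k + β_k for all k ≥ 0, with 0 ≤ α_k ≤ 1, β_k ≥ 0, ∑_{k=0}^∞ α_k = ∞, ∑_{k=0}^∞ β_k < ∞, and lim_{k→∞} β_k/α_k = 0. Then ν_k → 0. -/

import Mathlib

open Filter Topology

/-- Deterministic Robbins–Siegmund-type lemma: if ν_{k+1} ≤ (1-α_k)ν_k + β_k with
α_k ∈ [0,1], β_k ≥ 0, ∑α_k = ∞, ∑β_k < ∞ and β_k/α_k → 0, then ν_k → 0. -/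
theorem robbins_siegmund_deterministic (ν α β : ℕ → ℝ)
    (hν : ∀ k, 0 ≤ ν k)
    (hrec : ∀ k, ν (k + 1) ≤ (1 - α k) * ν k + β k)
    (hα : ∀ k, 0 ≤ α k ∧ α k ≤ 1)
    (hβ : ∀ k, 0 ≤ β k)
    (hαdiv : Tendsto (fun n => ∑ k ∈ Finset.range n, α k) atTop atTop)
    (hβsum : Summable β)
    (hratio : Tendsto (fun k => β k / α k) atTop (𝓝 0)) :
    Tendsto ν atTop (𝓝 0) := by
  rw [Metric.tendsto_atTop]
  intro ε hε
  set δ := ε / 3 with hδdef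
  have hδ : 0 < δ := by positivity
  -- tail sums of β
  have hsummable : ∀ n, Summable fun k => β (k + n) := fun n =>
    (summable_nat_add_iff n).2 hβsum
  set T : ℕ → ℝ := fun n => ∑' k, β (k + n) with hTdef
  have hT0 : ∀ n, 0 ≤ T n := fun n => tsum_nonneg fun k => hβ _
  have hTrec : ∀ n, T n = β n + T (n + 1) := by
    intro n
    have h := Summable.tsum_eq_zero_add (hsummable n)
    simp only [zero_add] at h
    have h2 : (fun k => β (k + 1 + n)) = fun k => β (k + (n + 1)) := by
      funext k; congr 1; omega
    rw [h2] at h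
    exact h
  have hTanti : ∀ n, T (n + 1) ≤ T n := fun n => by
    rw [hTrec n]; linarith [hβ n]
  have hTanti' : Antitone T := antitone_nat_of_succ_le hTanti
  have hTtend : Tendsto T atTop (𝓝 0) := tendsto_sum_nat_add β
  -- choose N
  obtain ⟨N1, hN1⟩ := (Metric.tendsto_atTop.1 hratio) (δ / 2) (by positivity)
  obtain ⟨N2, hN2⟩ := (Metric.tendsto_atTop.1 hTtend) δ hδ
  set N := max N1 N2 with hNdef
  have hβα : ∀ k, N ≤ k → 0 < α k → β k ≤ δ / 2 * α k := by
    intro k hk hαk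
    have h := hN1 k (le_trans (le_max_left _ _) hk)
    rw [Real.dist_eq, sub_zero] at h
    have h2 : β k / α k < δ / 2 := lt_of_abs_lt h
    have h3 : β k < δ / 2 * α k := (div_lt_iff₀ hαk).1 h2
    linarith
  have hTN : T N ≤ δ := by
    have h := hN2 N (le_max_right _ _)
    rw [Real.dist_eq, sub_zero, abs_of_nonneg (hT0 N)] at h
    linarith
  -- the quantity max (ν n) δ + T n is nonincreasing for n ≥ N
  have hstep : ∀ n, N ≤ n → max (ν (n + 1)) δ + T (n + 1) ≤ max (ν n) δ + T n := by
    intro n hn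
    rcases lt_or_eq_of_le (hα n).1 with hpos | hzero
    · have hb := hβα n hn hpos
      have h1α : 0 ≤ 1 - α n := by linarith [(hα n).2]
      have hνmax : ν n ≤ max (ν n) δ := le_max_left _ _
      have hδmax : δ ≤ max (ν n) δ := le_max_right _ _
      have h1 : ν (n + 1) ≤ max (ν n) δ := by
        have hr := hrec n
        nlinarith [(hα n).1, mul_le_mul_of_nonneg_left hνmax h1α]
      have h2 : max (ν (n + 1)) δ ≤ max (ν n) δ := max_le h1 hδmax
      linarith [hTanti n]
    · have hr := hrec n
      rw [← hzero] at hr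
      simp only [sub_zero, one_mul] at hr
      have h2 : max (ν (n + 1)) δ ≤ max (ν n) δ + β n :=
        max_le (by linarith [le_max_left (ν n) δ])
          (by linarith [le_max_right (ν n) δ, hβ n])
      have h3 := hTrec n
      linarith
  have hmono : ∀ m n, N ≤ m → m ≤ n → max (ν n) δ + T n ≤ max (ν m) δ + T m := by
    intro m n hm hmn
    induction n, hmn using Nat.le_induction with
    | base => exact le_refl _
    | succ n hmn ih => exact le_trans (hstep n (le_trans hm hmn)) ih
  -- there exists m ≥ N with ν m ≤ δ
  have hex : ∃ m, N ≤ m ∧ ν m ≤ δ := by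
    by_contra hcon
    push_neg at hcon
    have key : ∀ n, N ≤ n →
        ν n + δ / 2 * ∑ k ∈ Finset.Ico N n, α k ≤ ν N + ∑ k ∈ Finset.Ico N n, β k := by
      intro n hn
      induction n, hn using Nat.le_induction with
      | base => simp
      | succ n hn ih =>
        have hstep2 : ν (n + 1) ≤ ν n - δ / 2 * α n + β n := by
          rcases lt_or_eq_of_le (hα n).1 with hpos | hzero
          · have hb := hβα n hn hpos
            have hνn := hcon n hn
            nlinarith [hrec n]
          · have hr := hrec n
            rw [← hzero] at hr
            simp only [sub_zero, one_mul] at hr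
            have : δ / 2 * α n = 0 := by rw [← hzero]; ring
            linarith
        rw [Finset.sum_Ico_succ_top hn, Finset.sum_Ico_succ_top hn]
        have hring : δ / 2 * (∑ k ∈ Finset.Ico N n, α k + α n)
            = δ / 2 * ∑ k ∈ Finset.Ico N n, α k + δ / 2 * α n := by ring
        linarith
    have hβIco : ∀ n, ∑ k ∈ Finset.Ico N n, β k ≤ T N := by
      intro n
      rw [Finset.sum_Ico_eq_sum_range]
      have heq : ∀ i, β (N + i) = β (i + N) := fun i => by rw [add_comm]
      calc ∑ i ∈ Finset.range (n - N), β (N + i)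
          = ∑ i ∈ Finset.range (n - N), β (i + N) := by
            exact Finset.sum_congr rfl fun i _ => heq i
        _ ≤ T N := Summable.sum_le_tsum _ (fun k _ => hβ _) (hsummable N)
    have hdiv2 : Tendsto (fun n => ∑ k ∈ Finset.range n, α k
        + -(∑ k ∈ Finset.range N, α k)) atTop atTop :=
      tendsto_atTop_add_const_right _ _ hαdiv
    obtain ⟨n, hn1, hn2⟩ :=
      ((hdiv2.eventually_ge_atTop ((ν N + T N) / (δ / 2) + 1)).and
        (eventually_ge_atTop N)).exists
    have hIco : ∑ k ∈ Finset.Ico N n, α k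
        = ∑ k ∈ Finset.range n, α k - ∑ k ∈ Finset.range N, α k :=
      Finset.sum_Ico_eq_sub _ hn2
    have hkey := key n hn2
    have hνn := hν n
    have hβb := hβIco n
    have h2 : δ / 2 * ∑ k ∈ Finset.Ico N n, α k ≤ ν N + T N := by linarith
    have h1 : δ / 2 * ((ν N + T N) / (δ / 2) + 1)
        ≤ δ / 2 * ∑ k ∈ Finset.Ico N n, α k := by
      apply mul_le_mul_of_nonneg_left _ (by positivity)
      rw [hIco]; linarith
    have h3 : δ / 2 * ((ν N + T N) / (δ / 2) + 1) = (ν N + T N) + δ / 2 := by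
      field_simp
    linarith
  obtain ⟨m, hm, hνm⟩ := hex
  refine ⟨m, fun n hn => ?_⟩
  have hu := hmono m n hm hn
  have h1 : ν n ≤ max (ν n) δ := le_max_left _ _
  have h2 : max (ν m) δ = δ := max_eq_right hνm
  have hTm : T m ≤ T N := hTanti' hm
  rw [Real.dist_eq, sub_zero, abs_of_nonneg (hν n)]
  have : ν n ≤ δ + T m := by
    rw [h2] at hu
    linarith [hT0 n]
  linarith
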